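/- Let p : (D, K) → (C, J), p' : (D', K') → (C', J') and p'' : (D'', K'') → (C'', J'') be comorphisms of sites between small sites, B : (C', J') → (C, J) and B' : (C'', J'') → (C', J') morphisms of sites, A : (D', K') → (D, K) and A' : (D'', K'') → (D', K') continuous functors, and φ : p ∘ A ⟹ B ∘ p', φ' : p' ∘ A' ⟹ B' ∘ p'' natural transformations. Then the η-extension of the pair (A ∘ A', (B ∗ φ') ∘ (φ ∗ A')) is naturally isomorphic to the composite Ã^* ∘ Ã'^* of the η-extensions of (A, φ) and of (A', φ'). -/

import Mathlib

/-!
STATEMENT 8: Functoriality of the η-extension: given comorphisms of sites `p`, `p'`, `p''`,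
morphisms of sites `B`, `B'`, continuous functors `A`, `A'` and natural transformations
`φ : p ∘ A ⟹ B ∘ p'`, `φ' : p' ∘ A' ⟹ B' ∘ p''`, the η-extension of the pair
`(A ∘ A', (B ∗ φ') ∘ (φ ∗ A'))` is naturally isomorphic to the composite `Ã^* ∘ Ã'^*` of the
η-extensions of `(A, φ)` and `(A', φ')`.
-/

open CategoryTheory CategoryTheory.Limits Opposite

universe u

noncomputable section

namespace Statement8

variable {C D C' D' : Type u} [SmallCategory C] [SmallCategory D]
  [SmallCategory C'] [SmallCategory D']

/-- Precomposition with `F.op` on presheaves of types. -/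
abbrev pre {X Y : Type u} [SmallCategory X] [SmallCategory Y] (F : X ⥤ Y) :
    (Yᵒᵖ ⥤ Type u) ⥤ (Xᵒᵖ ⥤ Type u) :=
  (Functor.whiskeringLeft Xᵒᵖ Yᵒᵖ (Type u)).obj F.op

/-- For a comorphism of sites `p : (D, K) ⥤ (C, J)`, the functor
`C_p^* : Sh(C, J) ⥤ Sh(D, K)` given by precomposition with `p` followed by
`K`-sheafification. -/
def Cstar (J : GrothendieckTopology C) (p : D ⥤ C) (K : GrothendieckTopology D) :
    Sheaf J (Type u) ⥤ Sheaf K (Type u) :=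
  sheafToPresheaf J (Type u) ⋙ pre p ⋙ presheafToSheaf K (Type u)

variable (J : GrothendieckTopology C) (K : GrothendieckTopology D)
  (J' : GrothendieckTopology C') (K' : GrothendieckTopology D')
  (p : D ⥤ C) (p' : D' ⥤ C') (B : C' ⥤ C) (A : D' ⥤ D)

/-- The canonical comparison `pre A ⋙ a_{K'} ⟶ a_K ⋙ Sh(A)_*`, obtained as a mate of the
identity across the sheafification adjunctions. -/
def delta3 [Functor.IsContinuous.{u} A K' K] :
    pre A ⋙ presheafToSheaf K' (Type u) ⟶
      presheafToSheaf K (Type u) ⋙ A.sheafPushforwardContinuous (Type u) K' K :=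
  (mateEquiv (sheafificationAdjunction K (Type u))
      (sheafificationAdjunction K' (Type u))).symm
    (TwoSquare.mk _ _ _ _ (𝟙 (sheafToPresheaf K (Type u) ⋙ pre A)))

/-- Precomposition with `φ.op`, as a natural transformation between precomposition
functors on presheaf categories. -/
def theta (φ : A ⋙ p ⟶ p' ⋙ B) : pre B ⋙ pre p' ⟶ pre p ⋙ pre A :=
  (Functor.whiskeringLeft D'ᵒᵖ Cᵒᵖ (Type u)).map (NatTrans.op φ)

end Statement8

namespace Statement8

variable {C D C' D' : Type u} [SmallCategory C] [SmallCategory D]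
  [SmallCategory C'] [SmallCategory D']
  (J : GrothendieckTopology C) (K : GrothendieckTopology D)
  (J' : GrothendieckTopology C') (K' : GrothendieckTopology D')
  (p : D ⥤ C) (p' : D' ⥤ C') (B : C' ⥤ C) (A : D' ⥤ D)

/-- The canonical comparison `φ̄ : C_{p'}^* ∘ Sh(B)_* ⟶ Sh(A)_* ∘ C_p^*` induced by
precomposition with `φ`; it is the mate of `φ̃`. -/
def phiBar [Functor.IsContinuous.{u} A K' K] [Functor.IsContinuous.{u} B J' J]
    (φ : A ⋙ p ⟶ p' ⋙ B) :
    B.sheafPushforwardContinuous (Type u) J' J ⋙ Cstar J' p' K' ⟶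
      Cstar J p K ⋙ A.sheafPushforwardContinuous (Type u) K' K :=
  Functor.whiskerRight (Functor.whiskerLeft (sheafToPresheaf J (Type u)) (theta p p' B A φ))
      (presheafToSheaf K' (Type u)) ≫
    Functor.whiskerLeft (sheafToPresheaf J (Type u) ⋙ pre p) (delta3 K K' A)

/-- `φ̃ : Sh(A)^* ∘ C_{p'}^* ⟶ C_p^* ∘ Sh(B)^*`, the mate of `φ̄`. -/
def phiTilde [Functor.IsContinuous.{u} A K' K] [Functor.IsContinuous.{u} B J' J]
    (φ : A ⋙ p ⟶ p' ⋙ B) :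
    Cstar J' p' K' ⋙ A.sheafPullback (Type u) K' K ⟶
      B.sheafPullback (Type u) J' J ⋙ Cstar J p K :=
  (mateEquiv (B.sheafAdjunctionContinuous (Type u) J' J)
      (A.sheafAdjunctionContinuous (Type u) K' K)).symm
    (phiBar J K J' K' p p' B A φ)

end Statement8

namespace Statement8

variable {C D C' D' : Type u} [SmallCategory C] [SmallCategory D]
  [SmallCategory C'] [SmallCategory D']
  (J : GrothendieckTopology C) (K : GrothendieckTopology D)
  (J' : GrothendieckTopology C') (K' : GrothendieckTopology D')
  (p : D ⥤ C) (p' : D' ⥤ C') (B : C' ⥤ C) (A : D' ⥤ D)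

/-- The η-extension of `(A, φ)`:
`(F', E', α') ↦ (Sh(A)^*(F'), Sh(B)^*(E'), φ̃_{E'} ∘ Sh(A)^*(α'))`. -/
def etaExt [Functor.IsContinuous.{u} A K' K] [Functor.IsContinuous.{u} B J' J]
    (φ : A ⋙ p ⟶ p' ⋙ B) :
    Comma (𝟭 (Sheaf K' (Type u))) (Cstar J' p' K') ⥤
      Comma (𝟭 (Sheaf K (Type u))) (Cstar J p K) where
  obj X :=
    { left := (A.sheafPullback (Type u) K' K).obj X.left
      right := (B.sheafPullback (Type u) J' J).obj X.right
      hom := (A.sheafPullback (Type u) K' K).map X.hom ≫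
        (phiTilde J K J' K' p p' B A φ).app X.right }
  map {X Y} m :=
    { left := (A.sheafPullback (Type u) K' K).map m.left
      right := (B.sheafPullback (Type u) J' J).map m.right
      w := by
        have hw := m.w
        have hnat := (phiTilde J K J' K' p p' B A φ).naturality m.right
        simp only [Functor.id_map] at hw ⊢
        simp only [Functor.comp_map] at hnat
        rw [← Category.assoc, ← Functor.map_comp, hw, Functor.map_comp, Category.assoc,
          hnat, ← Category.assoc] }

end Statement8

namespace Statement8

variable {C D C' D' C'' D'' : Type u} [SmallCategory C] [SmallCategory D]
  [SmallCategory C'] [SmallCategory D'] [SmallCategory C''] [SmallCategory D'']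

/-- A functor `p : (D, K) → (C, J)` is a *comorphism of sites* if for every object `d` of `D`
and every `J`-covering sieve `S` on `p(d)` there is a `K`-covering sieve `S'` on `d` with
`p(S') ⊆ S`. -/
def IsComorphismOfSites {C₁ C₂ : Type*} [Category C₁] [Category C₂] (q : C₁ ⥤ C₂)
    (K : GrothendieckTopology C₁) (J : GrothendieckTopology C₂) : Prop :=
  ∀ (d : C₁) (S : Sieve (q.obj d)), S ∈ J (q.obj d) →
    ∃ S' ∈ K d, ∀ ⦃d' : C₁⦄ (g : d' ⟶ d), S' g → S (q.map g)


section Aux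

variable {C D C' D' C'' D'' : Type u} [SmallCategory C] [SmallCategory D]
  [SmallCategory C'] [SmallCategory D'] [SmallCategory C''] [SmallCategory D'']

/-- comparison iso between pullback of a composite and composite of pullbacks -/
def sigmaIso (K : GrothendieckTopology D) (K' : GrothendieckTopology D')
    (K'' : GrothendieckTopology D'') (A : D' ⥤ D) (A' : D'' ⥤ D')
    [Functor.IsContinuous.{u} A K' K] [Functor.IsContinuous.{u} A' K'' K']
    [Functor.IsContinuous.{u} (A' ⋙ A) K'' K] :
    (A' ⋙ A).sheafPullback (Type u) K'' K ≅
      A'.sheafPullback (Type u) K'' K' ⋙ A.sheafPullback (Type u) K' K :=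
  (conjugateIsoEquiv
    ((A'.sheafAdjunctionContinuous (Type u) K'' K').comp
      (A.sheafAdjunctionContinuous (Type u) K' K))
    ((A' ⋙ A).sheafAdjunctionContinuous (Type u) K'' K)).symm (Iso.refl _)

variable (J : GrothendieckTopology C) (K : GrothendieckTopology D)
  (J' : GrothendieckTopology C') (K' : GrothendieckTopology D')
  (J'' : GrothendieckTopology C'') (K'' : GrothendieckTopology D'')
  (p : D ⥤ C) (p' : D' ⥤ C') (p'' : D'' ⥤ C'')
  (B : C' ⥤ C) (B' : C'' ⥤ C') (A : D' ⥤ D) (A' : D'' ⥤ D')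

lemma theta_comp (φ : A ⋙ p ⟶ p' ⋙ B) (φ' : A' ⋙ p' ⟶ p'' ⋙ B') :
    theta p p'' (B' ⋙ B) (A' ⋙ A) (Functor.whiskerLeft A' φ ≫ Functor.whiskerRight φ' B) =
      Functor.whiskerLeft (pre B) (theta p' p'' B' A' φ') ≫
        Functor.whiskerRight (theta p p' B A φ) (pre A') := by
  ext P d''
  simp [theta]

lemma delta3_comp [Functor.IsContinuous.{u} A K' K] [Functor.IsContinuous.{u} A' K'' K']
    [Functor.IsContinuous.{u} (A' ⋙ A) K'' K] :
    delta3 K K'' (A' ⋙ A) =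
      TwoSquare.hComp (delta3 K K' A) (delta3 K' K'' A') := by
  have h := mateEquiv_vcomp (sheafificationAdjunction K (Type u))
    (sheafificationAdjunction K' (Type u)) (sheafificationAdjunction K'' (Type u))
    (delta3 K K' A) (delta3 K' K'' A')
  rw [show delta3 K K' A = (mateEquiv (sheafificationAdjunction K (Type u))
      (sheafificationAdjunction K' (Type u))).symm
      (TwoSquare.mk _ _ _ _ (𝟙 (sheafToPresheaf K (Type u) ⋙ pre A))) from rfl,
    show delta3 K' K'' A' = (mateEquiv (sheafificationAdjunction K' (Type u))
      (sheafificationAdjunction K'' (Type u))).symm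
      (TwoSquare.mk _ _ _ _ (𝟙 (sheafToPresheaf K' (Type u) ⋙ pre A'))) from rfl,
    Equiv.apply_symm_apply, Equiv.apply_symm_apply] at h
  refine (Equiv.symm_apply_eq _).2 ?_
  refine Eq.trans ?_ h.symm
  ext X
  simp [TwoSquare.vComp]
  rfl

lemma phiBar_comp [Functor.IsContinuous.{u} A K' K] [Functor.IsContinuous.{u} B J' J]
    [Functor.IsContinuous.{u} A' K'' K'] [Functor.IsContinuous.{u} B' J'' J']
    [Functor.IsContinuous.{u} (A' ⋙ A) K'' K] [Functor.IsContinuous.{u} (B' ⋙ B) J'' J]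
    (φ : A ⋙ p ⟶ p' ⋙ B) (φ' : A' ⋙ p' ⟶ p'' ⋙ B') :
    phiBar J K J'' K'' p p'' (B' ⋙ B) (A' ⋙ A) (Functor.whiskerLeft A' φ ≫ Functor.whiskerRight φ' B) =
      TwoSquare.hComp (phiBar J K J' K' p p' B A φ)
        (phiBar J' K' J'' K'' p' p'' B' A' φ') := by
  simp only [phiBar, theta_comp, delta3_comp K K' K'' A A', TwoSquare.hComp,
    TwoSquare.hComp, Functor.whiskerLeft_comp, Functor.whiskerRight_comp]
  ext E : 2
  simp only [NatTrans.comp_app, Functor.whiskerLeft_app, Functor.whiskerRight_app,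
    Functor.comp_obj, Category.assoc]
  change (presheafToSheaf K'' (Type u)).map ((theta p' p'' B' A' φ').app ((pre B).obj ((sheafToPresheaf J (Type u)).obj E))) ≫
      (presheafToSheaf K'' (Type u)).map ((pre A').map ((theta p p' B A φ).app ((sheafToPresheaf J (Type u)).obj E))) ≫
      (delta3 K' K'' A').app ((pre A).obj ((pre p).obj ((sheafToPresheaf J (Type u)).obj E))) ≫
      (A'.sheafPushforwardContinuous (Type u) K'' K').map ((delta3 K K' A).app ((pre p).obj ((sheafToPresheaf J (Type u)).obj E))) =
    (presheafToSheaf K'' (Type u)).map ((theta p' p'' B' A' φ').app ((pre B).obj ((sheafToPresheaf J (Type u)).obj E))) ≫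
      (delta3 K' K'' A').app ((pre p').obj ((pre B).obj ((sheafToPresheaf J (Type u)).obj E))) ≫
      (A'.sheafPushforwardContinuous (Type u) K'' K').map
        ((presheafToSheaf K' (Type u)).map ((theta p p' B A φ).app ((sheafToPresheaf J (Type u)).obj E)) ≫
          (delta3 K K' A).app ((pre p).obj ((sheafToPresheaf J (Type u)).obj E)))
  have hnat := (delta3 K' K'' A').naturality
    ((theta p p' B A φ).app ((sheafToPresheaf J (Type u)).obj E))
  dsimp only [Functor.comp_map, Functor.comp_obj] at hnat
  slice_lhs 2 3 => rw [hnat]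
  simp only [Category.assoc]
  rfl

lemma key [Functor.IsContinuous.{u} A K' K] [Functor.IsContinuous.{u} B J' J]
    [Functor.IsContinuous.{u} A' K'' K'] [Functor.IsContinuous.{u} B' J'' J']
    [Functor.IsContinuous.{u} (A' ⋙ A) K'' K] [Functor.IsContinuous.{u} (B' ⋙ B) J'' J]
    (φ : A ⋙ p ⟶ p' ⋙ B) (φ' : A' ⋙ p' ⟶ p'' ⋙ B') :
    Functor.whiskerLeft (Cstar J'' p'' K'') (sigmaIso K K' K'' A A').hom ≫
      TwoSquare.vComp (phiTilde J' K' J'' K'' p' p'' B' A' φ')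
        (phiTilde J K J' K' p p' B A φ) =
    phiTilde J K J'' K'' p p'' (B' ⋙ B) (A' ⋙ A) (Functor.whiskerLeft A' φ ≫ Functor.whiskerRight φ' B) ≫
      Functor.whiskerRight (sigmaIso J J' J'' B B').hom (Cstar J p K) := by
  refine Equiv.injective (mateEquiv
    ((B'.sheafAdjunctionContinuous (Type u) J'' J').comp
      (B.sheafAdjunctionContinuous (Type u) J' J))
    ((A' ⋙ A).sheafAdjunctionContinuous (Type u) K'' K)) ?_
  refine Eq.trans (mateEquiv_conjugateEquiv_vcomp
    ((B'.sheafAdjunctionContinuous (Type u) J'' J').comp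
      (B.sheafAdjunctionContinuous (Type u) J' J))
    ((A'.sheafAdjunctionContinuous (Type u) K'' K').comp
      (A.sheafAdjunctionContinuous (Type u) K' K))
    ((A' ⋙ A).sheafAdjunctionContinuous (Type u) K'' K)
    (TwoSquare.vComp (phiTilde J' K' J'' K'' p' p'' B' A' φ')
      (phiTilde J K J' K' p p' B A φ))
    (sigmaIso K K' K'' A A').hom) ?_
  refine Eq.trans ?_ (conjugateEquiv_mateEquiv_vcomp
    ((B'.sheafAdjunctionContinuous (Type u) J'' J').comp
      (B.sheafAdjunctionContinuous (Type u) J' J))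
    ((B' ⋙ B).sheafAdjunctionContinuous (Type u) J'' J)
    ((A' ⋙ A).sheafAdjunctionContinuous (Type u) K'' K)
    (sigmaIso J J' J'' B B').hom
    (phiTilde J K J'' K'' p p'' (B' ⋙ B) (A' ⋙ A)
      (Functor.whiskerLeft A' φ ≫ Functor.whiskerRight φ' B))).symm
  rw [mateEquiv_hcomp (B'.sheafAdjunctionContinuous (Type u) J'' J')
    (A'.sheafAdjunctionContinuous (Type u) K'' K')
    (B.sheafAdjunctionContinuous (Type u) J' J)
    (A.sheafAdjunctionContinuous (Type u) K' K)
    (phiTilde J' K' J'' K'' p' p'' B' A' φ') (phiTilde J K J' K' p p' B A φ)]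
  simp only [phiTilde]
  erw [Equiv.apply_symm_apply, Equiv.apply_symm_apply, Equiv.apply_symm_apply]
  rw [phiBar_comp J K J' K' J'' K'' p p' p'' B B' A A' φ φ']
  simp only [sigmaIso, conjugateIsoEquiv_symm_apply_hom, Equiv.apply_symm_apply, Iso.refl_hom]
  erw [Equiv.apply_symm_apply, conjugateIsoEquiv_symm_apply_hom, Equiv.apply_symm_apply]
  simp [TwoSquare.whiskerBottom, TwoSquare.whiskerTop]
  exact (Category.comp_id _).trans (by erw [Functor.whiskerRight_id', Category.id_comp])

end Aux

theorem statement8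
    (J : GrothendieckTopology C) (K : GrothendieckTopology D)
    (J' : GrothendieckTopology C') (K' : GrothendieckTopology D')
    (J'' : GrothendieckTopology C'') (K'' : GrothendieckTopology D'')
    (p : D ⥤ C) (p' : D' ⥤ C') (p'' : D'' ⥤ C'')
    (B : C' ⥤ C) (B' : C'' ⥤ C') (A : D' ⥤ D) (A' : D'' ⥤ D')
    (hp : IsComorphismOfSites p K J) (hp' : IsComorphismOfSites p' K' J')
    (hp'' : IsComorphismOfSites p'' K'' J'')
    [Functor.IsContinuous.{u} A K' K] [Functor.IsContinuous.{u} B J' J]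
    [Functor.IsContinuous.{u} A' K'' K'] [Functor.IsContinuous.{u} B' J'' J']
    (hB : PreservesFiniteLimits (B.sheafPullback (Type u) J' J))
    (hB' : PreservesFiniteLimits (B'.sheafPullback (Type u) J'' J'))
    (φ : A ⋙ p ⟶ p' ⋙ B) (φ' : A' ⋙ p' ⟶ p'' ⋙ B') :
    haveI : Functor.IsContinuous.{u} (A' ⋙ A) K'' K :=
      Functor.isContinuous_comp A' A K'' K' K
    haveI : Functor.IsContinuous.{u} (B' ⋙ B) J'' J :=
      Functor.isContinuous_comp B' B J'' J' J
    Nonempty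
      (etaExt J K J'' K'' p p'' (B' ⋙ B) (A' ⋙ A)
          (Functor.whiskerLeft A' φ ≫ Functor.whiskerRight φ' B) ≅
        etaExt J' K' J'' K'' p' p'' B' A' φ' ⋙ etaExt J K J' K' p p' B A φ) := by
  haveI : Functor.IsContinuous.{u} (A' ⋙ A) K'' K :=
    Functor.isContinuous_comp A' A K'' K' K
  haveI : Functor.IsContinuous.{u} (B' ⋙ B) J'' J :=
    Functor.isContinuous_comp B' B J'' J' J
  refine ⟨NatIso.ofComponents (fun X => Comma.isoMk
    ((sigmaIso K K' K'' A A').app X.left) ((sigmaIso J J' J'' B B').app X.right) ?_)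
    (fun {X Y} m => ?_)⟩
  · have hk := congr_app (key J K J' K' J'' K'' p p' p'' B B' A A' φ φ') X.right
    simp only [NatTrans.comp_app, Functor.whiskerLeft_app, Functor.whiskerRight_app,
      TwoSquare.vComp, Functor.comp_obj, Functor.associator_hom_app, Functor.associator_inv_app,
      Category.id_comp, Category.comp_id] at hk
    have hn := (sigmaIso K K' K'' A A').hom.naturality X.hom
    dsimp only [Functor.comp_map, Functor.id_obj] at hn
    dsimp only [etaExt, Functor.comp_obj, Functor.id_obj, Functor.id_map, Iso.app_hom]
    rw [Functor.map_comp, Category.assoc, ← Category.assoc, ← hn, Category.assoc, hk,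
      Category.assoc]
  · ext : 1
    · dsimp only [etaExt, Comma.comp_left, Comma.isoMk_hom_left, Functor.comp_map,
        Iso.app_hom, Functor.id_obj]
      exact (sigmaIso K K' K'' A A').hom.naturality m.left
    · dsimp only [etaExt, Comma.comp_right, Comma.isoMk_hom_right, Functor.comp_map,
        Iso.app_hom, Functor.id_obj]
      exact (sigmaIso J J' J'' B B').hom.naturality m.right

end Statement8
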